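/- arXiv:2604.02523 — 2 statements merged into one kernel-verified Lean document; each statement's English description precedes it below -/
import Mathlib

section
/- Let ω_n > 0 and ζ > 0 be real numbers. Then the improper integral over ω ∈ ℝ of 1/((ω_n² − ω²)² + 4ζ²ω_n²ω²) dω equals π/(2ζω_n³). -/
open MeasureTheory Set Filter Real Topology

/-- For `ωn, ζ > 0`, the improper integral over `ω ∈ ℝ` of
`1/((ωn² − ω²)² + 4ζ²ωn²ω²)` equals `π/(2ζωn³)`. -/
theorem integral_squared_frequency_response
    (ωn ζ : ℝ) (hωn : 0 < ωn) (hζ : 0 < ζ) :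
    ∫ ω : ℝ, 1 / ((ωn ^ 2 - ω ^ 2) ^ 2 + 4 * ζ ^ 2 * ωn ^ 2 * ω ^ 2)
      = Real.pi / (2 * ζ * ωn ^ 3) := by
  set c : ℝ := 2 * ζ * ωn with hc_def
  have hc : 0 < c := by positivity
  set D : ℝ → ℝ := fun x => (ωn ^ 2 - x ^ 2) ^ 2 + 4 * ζ ^ 2 * ωn ^ 2 * x ^ 2 with hD_def
  have hD : ∀ x : ℝ, 0 < D x := by
    intro x
    rcases eq_or_ne x 0 with rfl | hx
    · simp only [hD_def]
      norm_num
      positivity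
    · have h1 : 0 < 4 * ζ ^ 2 * ωn ^ 2 * x ^ 2 := by positivity
      have h2 : 0 ≤ (ωn ^ 2 - x ^ 2) ^ 2 := sq_nonneg _
      simp only [hD_def]; linarith
  set f : ℝ → ℝ := fun x => 1 / D x with hf_def
  set gp : ℝ → ℝ := fun x => (x ^ 2 + ωn ^ 2) / D x with hgp_def
  set gm : ℝ → ℝ := fun x => (x ^ 2 - ωn ^ 2) / D x with hgm_def
  set Φ : ℝ → ℝ := fun x => if x ≤ 0 then -(π / (2 * c))
      else (1 / c) * Real.arctan ((x ^ 2 - ωn ^ 2) / (c * x)) with hΦ_def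
  have hΦ0val : Φ 0 = -(π / (2 * c)) := by simp [hΦ_def]
  -- derivative of Φ on Ioi 0
  have hΦderiv : ∀ x ∈ Ioi (0 : ℝ), HasDerivAt Φ (gp x) x := by
    intro x hx
    have hx0 : (0 : ℝ) < x := hx
    have hEq : (fun y : ℝ => (1 / c) * Real.arctan ((y ^ 2 - ωn ^ 2) / (c * y))) =ᶠ[𝓝 x] Φ := by
      filter_upwards [Ioi_mem_nhds hx0] with y hy
      simp [hΦ_def, not_le.mpr (show (0:ℝ) < y from hy)]
    have hu : HasDerivAt (fun y : ℝ => (y ^ 2 - ωn ^ 2) / (c * y))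
        ((2 * x * (c * x) - (x ^ 2 - ωn ^ 2) * c) / (c * x) ^ 2) x := by
      have h1 : HasDerivAt (fun y : ℝ => y ^ 2 - ωn ^ 2) (2 * x) x := by
        simpa using (hasDerivAt_pow 2 x).sub_const (ωn ^ 2)
      have h2 : HasDerivAt (fun y : ℝ => c * y) c x := by
        simpa using (hasDerivAt_id x).const_mul c
      exact h1.div h2 (by positivity)
    have harc := (Real.hasDerivAt_arctan ((x ^ 2 - ωn ^ 2) / (c * x))).comp x hu
    have hmain := harc.const_mul (1 / c)
    have hΦder := hmain.congr_of_eventuallyEq hEq.symm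
    refine hΦder.congr_deriv ?_
    have hcx : c * x ≠ 0 := by positivity
    have hDx : D x ≠ 0 := (hD x).ne'
    simp only [hgp_def, hD_def, Function.comp] at hDx ⊢
    field_simp
    ring
  -- continuity at 0 from the right
  have hΦcont : ContinuousWithinAt Φ (Ici 0) 0 := by
    rw [← continuousWithinAt_Ioi_iff_Ici]
    unfold ContinuousWithinAt
    rw [hΦ0val]
    have h2 : Tendsto (fun y : ℝ => (c * y)⁻¹) (𝓝[>] (0:ℝ)) atTop := by
      apply tendsto_inv_nhdsGT_zero.comp
      refine tendsto_nhdsWithin_of_tendsto_nhds_of_eventually_within _ ?_ ?_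
      · have hcont : Continuous fun y : ℝ => c * y := continuous_const.mul continuous_id
        have h := hcont.tendsto 0
        rw [mul_zero] at h
        exact h.mono_left nhdsWithin_le_nhds
      · filter_upwards [self_mem_nhdsWithin] with y hy
        have hy0 : (0:ℝ) < y := hy
        exact mul_pos hc hy0
    have h3 : Tendsto (fun y : ℝ => y ^ 2 - ωn ^ 2) (𝓝[>] (0:ℝ)) (𝓝 (-(ωn ^ 2))) := by
      have hcont2 : Continuous fun y : ℝ => y ^ 2 - ωn ^ 2 := (continuous_pow 2).sub continuous_const
      have h := hcont2.tendsto 0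
      norm_num at h
      exact h.mono_left nhdsWithin_le_nhds
    have h1 : Tendsto (fun y : ℝ => (y ^ 2 - ωn ^ 2) / (c * y)) (𝓝[>] (0:ℝ)) atBot := by
      have h := h2.atTop_mul_neg (neg_neg_iff_pos.mpr (by positivity) : -(ωn ^ 2) < 0) h3
      refine h.congr fun y => ?_
      rw [div_eq_inv_mul]
    have h4 : Tendsto (fun y : ℝ => (1 / c) * Real.arctan ((y ^ 2 - ωn ^ 2) / (c * y)))
        (𝓝[>] (0:ℝ)) (𝓝 ((1 / c) * (-(π / 2)))) :=
      ((Real.tendsto_arctan_atBot.mono_right nhdsWithin_le_nhds).comp h1).const_mul _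
    have h5 : (1 / c) * (-(π / 2)) = -(π / (2 * c)) := by
      rw [one_div_mul_eq_div, neg_div, div_div]
    rw [h5] at h4
    refine h4.congr' ?_
    filter_upwards [self_mem_nhdsWithin] with y hy
    simp [hΦ_def, not_le.mpr (show (0:ℝ) < y from hy)]
  -- limit at infinity
  have hΦtop : Tendsto Φ atTop (𝓝 (π / (2 * c))) := by
    have h1 : Tendsto (fun y : ℝ => (y ^ 2 - ωn ^ 2) / (c * y)) atTop atTop := by
      have heq : ∀ᶠ y : ℝ in atTop, y / c + -(ωn ^ 2 / c) * y⁻¹ = (y ^ 2 - ωn ^ 2) / (c * y) := by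
        filter_upwards [eventually_gt_atTop (0:ℝ)] with y hy
        have hy0 : y ≠ 0 := hy.ne'
        field_simp
        ring
      rw [← tendsto_congr' heq]
      exact (tendsto_id.atTop_div_const hc).atTop_add
        ((tendsto_inv_atTop_zero.const_mul _).congr fun y => rfl)
    have h4 : Tendsto (fun y : ℝ => (1 / c) * Real.arctan ((y ^ 2 - ωn ^ 2) / (c * y)))
        atTop (𝓝 ((1 / c) * (π / 2))) :=
      ((Real.tendsto_arctan_atTop.mono_right nhdsWithin_le_nhds).comp h1).const_mul _
    have h5 : (1 / c) * (π / 2) = π / (2 * c) := by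
      rw [one_div_mul_eq_div, div_div]
    rw [h5] at h4
    refine h4.congr' ?_
    filter_upwards [eventually_gt_atTop (0:ℝ)] with y hy
    simp [hΦ_def, not_le.mpr hy]
  have hgpnn : ∀ x ∈ Ioi (0:ℝ), 0 ≤ gp x := by
    intro x _
    exact div_nonneg (by positivity) (hD x).le
  have hIp : ∫ x in Ioi (0:ℝ), gp x = π / c := by
    rw [integral_Ioi_of_hasDerivAt_of_nonneg hΦcont hΦderiv hgpnn hΦtop, hΦ0val]
    ring
  have hgpint : IntegrableOn gp (Ioi (0:ℝ)) :=
    integrableOn_Ioi_deriv_of_nonneg hΦcont hΦderiv hgpnn hΦtop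
  have hDc : Continuous D := by
    rw [hD_def]; fun_prop
  have hfc : Continuous f := by
    rw [hf_def]
    exact continuous_const.div hDc fun x => (hD x).ne'
  have hfint : IntegrableOn f (Ioi (0:ℝ)) := by
    refine Integrable.mono' (hgpint.const_mul (ωn ^ 2)⁻¹)
      hfc.aestronglyMeasurable.restrict (ae_of_all _ fun x => ?_)
    have hDx := hD x
    have h1 : ‖f x‖ = 1 / D x := by
      simp only [hf_def]
      rw [Real.norm_eq_abs, abs_of_nonneg (by positivity)]
    rw [h1]
    simp only [hgp_def]
    rw [div_le_iff₀ hDx]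
    have h2 : (ωn ^ 2)⁻¹ * ((x ^ 2 + ωn ^ 2) / D x) * D x = (x ^ 2 + ωn ^ 2) / ωn ^ 2 := by
      field_simp
    rw [h2, le_div_iff₀ (by positivity : (0:ℝ) < ωn ^ 2)]
    nlinarith [sq_nonneg x]
  have hgmint : IntegrableOn gm (Ioi (0:ℝ)) := by
    have heq : gm = fun x => gp x - 2 * ωn ^ 2 * f x := by
      funext x
      have hDx := (hD x).ne'
      simp only [hgm_def, hgp_def, hf_def]
      field_simp
      ring
    rw [heq]
    exact hgpint.sub (hfint.const_mul _)
  -- the odd part integrates to zero via x ↦ ωn²/x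
  have hIm : ∫ x in Ioi (0:ℝ), gm x = 0 := by
    have himg : (fun x : ℝ => ωn ^ 2 / x) '' Ioi 0 = Ioi 0 := by
      ext y
      simp only [mem_image, mem_Ioi]
      constructor
      · rintro ⟨x, hx, rfl⟩; positivity
      · intro hy
        have hy' : y ≠ 0 := hy.ne'
        exact ⟨ωn ^ 2 / y, by positivity, by field_simp⟩
    have hderivw : ∀ x ∈ Ioi (0:ℝ), HasDerivWithinAt (fun x : ℝ => ωn ^ 2 / x)
        (-(ωn ^ 2) / x ^ 2) (Ioi 0) x := by
      intro x hx
      have hx0 : x ≠ 0 := (show (0:ℝ) < x from hx).ne'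
      have h := (hasDerivAt_inv hx0).const_mul (ωn ^ 2)
      have h' : HasDerivAt (fun y : ℝ => ωn ^ 2 / y) (-(ωn ^ 2) / x ^ 2) x := by
        rw [show (fun y : ℝ => ωn ^ 2 / y) = fun y => ωn ^ 2 * y⁻¹ from funext fun y => div_eq_mul_inv _ _]
        refine h.congr_deriv ?_
        ring
      exact h'.hasDerivWithinAt
    have hinj : InjOn (fun x : ℝ => ωn ^ 2 / x) (Ioi 0) := by
      intro a ha b hb h
      have ha' : a ≠ 0 := (show (0:ℝ) < a from ha).ne'
      have hb' : b ≠ 0 := (show (0:ℝ) < b from hb).ne'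
      have hωn' : ωn ^ 2 ≠ 0 := by positivity
      field_simp at h
      exact h.symm
    have hsub := integral_image_eq_integral_abs_deriv_smul measurableSet_Ioi hderivw hinj gm
    rw [himg] at hsub
    have hcong : ∫ x in Ioi (0:ℝ), |(-(ωn ^ 2) / x ^ 2)| • gm (ωn ^ 2 / x)
        = ∫ x in Ioi (0:ℝ), -gm x := by
      refine setIntegral_congr_fun measurableSet_Ioi fun x hx => ?_
      have hx0 : (0:ℝ) < x := hx
      have hx' : x ≠ 0 := hx0.ne'
      have h1 : |(-(ωn ^ 2) / x ^ 2)| = ωn ^ 2 / x ^ 2 := by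
        rw [abs_div, abs_neg, abs_of_nonneg (by positivity : (0:ℝ) ≤ ωn ^ 2),
          abs_of_nonneg (by positivity : (0:ℝ) ≤ x ^ 2)]
      rw [smul_eq_mul, h1]
      have hd1 : (ωn ^ 2 - (ωn ^ 2 / x) ^ 2) ^ 2 + 4 * ζ ^ 2 * ωn ^ 2 * (ωn ^ 2 / x) ^ 2 ≠ 0 := by
        have := (hD (ωn ^ 2 / x)).ne'
        simpa [hD_def] using this
      have hd2 : (ωn ^ 2 - x ^ 2) ^ 2 + 4 * ζ ^ 2 * ωn ^ 2 * x ^ 2 ≠ 0 := by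
        have := (hD x).ne'
        simpa [hD_def] using this
      simp only [hgm_def, hD_def]
      field_simp
      ring
    rw [hcong, integral_neg] at hsub
    linarith
  -- assemble on (0, ∞)
  have hfeq : ∀ x : ℝ, f x = 1 / (2 * ωn ^ 2) * (gp x - gm x) := by
    intro x
    have hDx := (hD x).ne'
    simp only [hf_def, hgp_def, hgm_def]
    field_simp
    ring
  have hIoi : ∫ x in Ioi (0:ℝ), f x = π / (2 * ωn ^ 2 * c) := by
    calc ∫ x in Ioi (0:ℝ), f x
        = ∫ x in Ioi (0:ℝ), 1 / (2 * ωn ^ 2) * (gp x - gm x) := by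
          refine setIntegral_congr_fun measurableSet_Ioi fun x _ => hfeq x
      _ = 1 / (2 * ωn ^ 2) * ((∫ x in Ioi (0:ℝ), gp x) - ∫ x in Ioi (0:ℝ), gm x) := by
          rw [integral_const_mul, integral_sub hgpint hgmint]
      _ = π / (2 * ωn ^ 2 * c) := by
          rw [hIp, hIm]
          field_simp
          ring
  -- assemble on ℝ
  show (∫ ω : ℝ, f ω) = π / (2 * ζ * ωn ^ 3)
  have heven : (fun ω : ℝ => f ω) = fun ω : ℝ => f |ω| := by
    funext x
    simp only [hf_def, hD_def, sq_abs]
  calc (∫ ω : ℝ, f ω) = ∫ ω : ℝ, f |ω| := by rw [heven]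
    _ = 2 * ∫ x in Ioi (0:ℝ), f x := integral_comp_abs
    _ = π / (2 * ζ * ωn ^ 3) := by
        rw [hIoi, hc_def]
        field_simp
end

section
/- Let m, K_p, K_d > 0 and σ ∈ ℝ, and define ω_n = √(K_p/m) and ζ = K_d/(2√(m·K_p)). Then (ω_n⁴σ²)/(2π) multiplied by the integral over ω ∈ ℝ of 1/((ω_n² − ω²)² + 4ζ²ω_n²ω²) dω equals σ²·K_p/(2K_d). In particular, this value is independent of the mass m. -/
open MeasureTheory Real Set Filter

private lemma Dpos (a b : ℝ) (ha : 0 < a) (hb : 0 < b) (ω : ℝ) :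
    0 < (a - ω^2)^2 + b^2*ω^2 := by
  rcases eq_or_ne ω 0 with rfl | h
  · simp; positivity
  · have : 0 < ω^2 := by positivity
    positivity

private lemma hasDeriv_F (a b : ℝ) (ha : 0 < a) (hb : 0 < b) (ω : ℝ) (hω : 0 < ω) :
    HasDerivAt (fun x : ℝ => if x ≤ 0 then (-(π/2))/b else (1/b) * arctan ((x - a/x)/b))
      ((ω^2 + a) / ((a - ω^2)^2 + b^2*ω^2)) ω := by
  have hω0 : ω ≠ 0 := ne_of_gt hω
  have h1 : HasDerivAt (fun x : ℝ => (x - a/x)/b) ((1 + a/ω^2)/b) ω := by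
    have : HasDerivAt (fun x : ℝ => x - a/x) (1 + a/ω^2) ω := by
      have hd : HasDerivAt (fun x : ℝ => a / x) (-a / ω^2) ω := by
        have := (hasDerivAt_inv hω0).const_mul a
        simp only [div_eq_mul_inv, neg_div]
        refine this.congr_deriv ?_
        field_simp
      have := (hasDerivAt_id ω).sub hd
      refine this.congr_deriv ?_; field_simp; ring
    exact this.div_const b
  have h2 := (Real.hasDerivAt_arctan ((ω - a/ω)/b)).comp ω h1
  have h3 := h2.const_mul (1/b)
  have heq : (fun x : ℝ => if x ≤ 0 then (-(π/2))/b else (1/b) * arctan ((x - a/x)/b))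
      =ᶠ[nhds ω] fun x => (1/b) * arctan ((x - a/x)/b) := by
    filter_upwards [eventually_gt_nhds hω] with x hx
    simp [not_le.mpr hx]
  refine HasDerivAt.congr_of_eventuallyEq ?_ heq
  refine h3.congr_deriv ?_
  have hbne : b ≠ 0 := ne_of_gt hb
  have hD : ((a - ω^2)^2 + b^2*ω^2) ≠ 0 := ne_of_gt (Dpos a b ha hb ω)
  field_simp
  ring

private lemma integral_piece1 (a b : ℝ) (ha : 0 < a) (hb : 0 < b) :
    IntegrableOn (fun ω : ℝ => (ω^2 + a) / ((a - ω^2)^2 + b^2*ω^2)) (Ioi 0) ∧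
    ∫ ω in Ioi (0:ℝ), (ω^2 + a) / ((a - ω^2)^2 + b^2*ω^2) = π / b := by
  set F : ℝ → ℝ := fun x => if x ≤ 0 then (-(π/2))/b else (1/b) * arctan ((x - a/x)/b) with hF
  have hderiv : ∀ x ∈ Ioi (0:ℝ), HasDerivAt F ((x^2 + a) / ((a - x^2)^2 + b^2*x^2)) x :=
    fun x hx => hasDeriv_F a b ha hb x hx
  have hpos : ∀ x ∈ Ioi (0:ℝ), 0 ≤ (x^2 + a) / ((a - x^2)^2 + b^2*x^2) := by
    intro x _
    have := Dpos a b ha hb x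
    positivity
  have harg_top : Tendsto (fun x : ℝ => (x - a/x)/b) atTop atTop := by
    apply Tendsto.atTop_div_const hb
    have h2 : Tendsto (fun x : ℝ => -(a/x)) atTop (nhds 0) := by
      simpa using (tendsto_const_nhds.div_atTop tendsto_id : Tendsto (fun x : ℝ => a/x) atTop (nhds 0)).neg
    simpa [sub_eq_add_neg] using tendsto_id.atTop_add h2
  have htop : Tendsto F atTop (nhds ((1/b) * (π/2))) := by
    have h3 : Tendsto (fun x : ℝ => (1/b) * arctan ((x - a/x)/b)) atTop (nhds ((1/b) * (π/2))) :=
      (((tendsto_arctan_atTop.mono_right nhdsWithin_le_nhds).comp harg_top).const_mul (1/b))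
    apply h3.congr'
    filter_upwards [eventually_gt_atTop (0:ℝ)] with x hx
    simp [hF, not_le.mpr hx]
  have hcont : ContinuousWithinAt F (Ici (0:ℝ)) 0 := by
    rw [← continuousWithinAt_Ioi_iff_Ici]
    have hval : F 0 = (-(π/2))/b := by simp [hF]
    rw [ContinuousWithinAt, hval]
    have harg_bot : Tendsto (fun x : ℝ => (x - a/x)/b) (nhdsWithin 0 (Ioi 0)) atBot := by
      apply Tendsto.atBot_div_const hb
      have h2 : Tendsto (fun x : ℝ => -(a/x)) (nhdsWithin 0 (Ioi 0)) atBot := by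
        have := tendsto_inv_nhdsGT_zero.const_mul_atTop ha
        simpa [div_eq_mul_inv, Function.comp_def] using tendsto_neg_atTop_atBot.comp this
      have h1 : Tendsto (fun x : ℝ => x) (nhdsWithin 0 (Ioi 0)) (nhds 0) :=
        tendsto_id.mono_left nhdsWithin_le_nhds
      simpa [sub_eq_add_neg] using h1.add_atBot h2
    have h3 : Tendsto (fun x : ℝ => (1/b) * arctan ((x - a/x)/b)) (nhdsWithin 0 (Ioi 0))
        (nhds ((1/b) * (-(π/2)))) :=
      (((tendsto_arctan_atBot.mono_right nhdsWithin_le_nhds).comp harg_bot).const_mul (1/b))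
    have h4 : Tendsto F (nhdsWithin 0 (Ioi 0)) (nhds ((1/b) * (-(π/2)))) := by
      apply h3.congr'
      filter_upwards [self_mem_nhdsWithin] with x hx
      simp [hF, not_le.mpr (mem_Ioi.mp hx)]
    convert h4 using 2
    ring
  refine ⟨integrableOn_Ioi_deriv_of_nonneg hcont hderiv hpos htop, ?_⟩
  rw [integral_Ioi_of_hasDerivAt_of_nonneg hcont hderiv hpos htop]
  have hval : F 0 = (-(π/2))/b := by simp [hF]
  rw [hval]
  field_simp
  ring


private lemma integral_piece2 (a b : ℝ) (ha : 0 < a) (hb : 0 < b) :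
    ∫ ω in Ioi (0:ℝ), (a - ω^2) / ((a - ω^2)^2 + b^2*ω^2) = 0 := by
  set h : ℝ → ℝ := fun ω => (a - ω^2) / ((a - ω^2)^2 + b^2*ω^2) with hh
  have himg : (fun x : ℝ => a / x) '' Ioi 0 = Ioi 0 := by
    ext y
    simp only [mem_image, mem_Ioi]
    constructor
    · rintro ⟨x, hx, rfl⟩; positivity
    · intro hy; exact ⟨a / y, by positivity, by field_simp⟩
  have hderiv : ∀ x ∈ Ioi (0:ℝ), HasDerivWithinAt (fun x : ℝ => a / x) (-(a / x^2)) (Ioi 0) x := by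
    intro x hx
    have hx0 : x ≠ 0 := ne_of_gt hx
    have : HasDerivAt (fun x : ℝ => a / x) (-(a / x^2)) x := by
      have := (hasDerivAt_inv hx0).const_mul a
      simp only [div_eq_mul_inv]
      refine this.congr_deriv ?_
      field_simp
    exact this.hasDerivWithinAt
  have hinj : InjOn (fun x : ℝ => a / x) (Ioi 0) := by
    intro x hx y hy hxy
    have hx0 : x ≠ 0 := ne_of_gt hx
    have hy0 : y ≠ 0 := ne_of_gt hy
    field_simp at hxy
    exact hxy.symm
  have key := integral_image_eq_integral_abs_deriv_smul measurableSet_Ioi hderiv hinj h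
  rw [himg] at key
  have key2 : ∫ x in Ioi (0:ℝ), |(-(a / x^2))| • h (a / x) = ∫ x in Ioi (0:ℝ), -(h x) := by
    apply setIntegral_congr_fun measurableSet_Ioi
    intro x hx
    have hx0 : (0:ℝ) < x := hx
    have hx0' : x ≠ 0 := ne_of_gt hx0
    have habs : |(-(a / x^2))| = a / x^2 := by
      rw [abs_neg, abs_of_pos (by positivity)]
    show |(-(a / x^2))| • h (a / x) = -(h x)
    rw [habs, smul_eq_mul, hh]
    have hD1 : ((a - x^2)^2 + b^2*x^2) ≠ 0 := ne_of_gt (Dpos a b ha hb x)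
    have hD2 : ((a - (a/x)^2)^2 + b^2*(a/x)^2) ≠ 0 := ne_of_gt (Dpos a b ha hb (a/x))
    field_simp
    ring
  rw [key2, integral_neg] at key
  linarith

private lemma integrable_one_div_D (a b : ℝ) (ha : 0 < a) (hb : 0 < b) :
    IntegrableOn (fun ω : ℝ => 1 / ((a - ω^2)^2 + b^2*ω^2)) (Ioi 0) := by
  have h1 := (integral_piece1 a b ha hb).1
  apply Integrable.mono (h1.const_mul (1/a))
  · apply Continuous.aestronglyMeasurable
    exact continuous_const.div (by continuity) (fun x => ne_of_gt (Dpos a b ha hb x))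
  · filter_upwards with x
    have hD := Dpos a b ha hb x
    rw [Real.norm_eq_abs, Real.norm_eq_abs, abs_of_pos (by positivity), abs_of_pos (by positivity)]
    rw [div_le_iff₀ hD] at *
    have : (1:ℝ) ≤ (x^2 + a)/a := by
      rw [le_div_iff₀ ha]; nlinarith [sq_nonneg x]
    calc (1:ℝ) ≤ (x^2+a)/a := this
      _ = 1/a * ((x^2+a)/((a - x^2)^2 + b^2*x^2)) * ((a - x^2)^2 + b^2*x^2) := by
          rw [mul_assoc, div_mul_cancel₀ _ hD.ne']
          ring

private lemma integrable_piece2 (a b : ℝ) (ha : 0 < a) (hb : 0 < b) :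
    IntegrableOn (fun ω : ℝ => (a - ω^2) / ((a - ω^2)^2 + b^2*ω^2)) (Ioi 0) := by
  have h1 := (integral_piece1 a b ha hb).1
  apply Integrable.mono h1
  · apply Continuous.aestronglyMeasurable
    exact (continuous_const.sub (continuous_pow 2)).div (by continuity)
      (fun x => ne_of_gt (Dpos a b ha hb x))
  · filter_upwards with x
    have hD := Dpos a b ha hb x
    have h2 : ‖(x^2+a)/((a - x^2)^2 + b^2*x^2)‖ = (x^2+a)/((a - x^2)^2 + b^2*x^2) := by
      rw [Real.norm_eq_abs, abs_of_pos (by positivity)]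
    rw [h2, Real.norm_eq_abs, abs_div, abs_of_pos hD]
    apply (div_le_div_iff_of_pos_right hD).mpr
    rw [abs_le]
    constructor <;> nlinarith [sq_nonneg x]

private lemma key_integral (a b : ℝ) (ha : 0 < a) (hb : 0 < b) :
    ∫ ω : ℝ, 1 / ((a - ω^2)^2 + b^2*ω^2) = π / (a*b) := by
  have heven : ∀ x : ℝ, 1 / ((a - |x|^2)^2 + b^2*|x|^2) = 1 / ((a - x^2)^2 + b^2*x^2) := by
    intro x; rw [sq_abs]
  have h2 := integral_comp_abs (f := fun x => 1 / ((a - x^2)^2 + b^2*x^2))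
  simp only [sq_abs] at h2
  rw [h2]
  have hsplit : ∫ ω in Ioi (0:ℝ), 1 / ((a - ω^2)^2 + b^2*ω^2)
      = ∫ ω in Ioi (0:ℝ), (2*a)⁻¹ * ((ω^2 + a) / ((a - ω^2)^2 + b^2*ω^2)
          + (a - ω^2) / ((a - ω^2)^2 + b^2*ω^2)) := by
    apply setIntegral_congr_fun measurableSet_Ioi
    intro x _
    have hD := Dpos a b ha hb x
    show 1 / ((a - x^2)^2 + b^2*x^2) = _
    field_simp
    ring
  rw [hsplit, integral_const_mul,
    integral_add (integral_piece1 a b ha hb).1 (integrable_piece2 a b ha hb),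
    (integral_piece1 a b ha hb).2, integral_piece2 a b ha hb]
  field_simp
  ring

/-- Steady-state position error variance under white-noise action errors:
`(ωn⁴σ²)/(2π) · ∫ 1/((ωn² − ω²)² + 4ζ²ωn²ω²) dω = σ²·Kp/(2Kd)`,
independent of the mass `m`. -/
theorem error_variance_eq_gain_ratio
    (m Kp Kd : ℝ) (hm : 0 < m) (hKp : 0 < Kp) (hKd : 0 < Kd) (σ : ℝ)
    (ωn ζ : ℝ)
    (hωn : ωn = Real.sqrt (Kp / m))
    (hζ : ζ = Kd / (2 * Real.sqrt (m * Kp))) :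
    (ωn ^ 4 * σ ^ 2) / (2 * Real.pi) *
      ∫ ω : ℝ, 1 / ((ωn ^ 2 - ω ^ 2) ^ 2 + 4 * ζ ^ 2 * ωn ^ 2 * ω ^ 2)
      = σ ^ 2 * Kp / (2 * Kd) := by
  have hωn_pos : 0 < ωn := hωn ▸ Real.sqrt_pos.mpr (div_pos hKp hm)
  have hsq : 0 < Real.sqrt (m * Kp) := Real.sqrt_pos.mpr (mul_pos hm hKp)
  have hζ_pos : 0 < ζ := hζ ▸ div_pos hKd (by positivity)
  have ha : (0:ℝ) < ωn^2 := by positivity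
  have hb : (0:ℝ) < 2*ζ*ωn := by positivity
  have hint : ∫ ω : ℝ, 1 / ((ωn ^ 2 - ω ^ 2) ^ 2 + 4 * ζ ^ 2 * ωn ^ 2 * ω ^ 2)
      = π / (ωn^2 * (2*ζ*ωn)) := by
    rw [← key_integral (ωn^2) (2*ζ*ωn) ha hb]
    congr 1
    funext ω
    ring_nf
  rw [hint]
  have h1 : Real.sqrt (Kp/m) * Real.sqrt (m*Kp) = Kp := by
    rw [← Real.sqrt_mul (by positivity) (m*Kp),
      show Kp/m*(m*Kp) = Kp^2 by field_simp,
      Real.sqrt_sq hKp.le]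
  have hrel : ωn * Kd = 2 * ζ * Kp := by
    rw [hωn, hζ]
    field_simp
    rw [mul_comm Kp m]; exact h1
  have hstep : (ωn^4*σ^2)/(2*π) * (π/(ωn^2*(2*ζ*ωn))) = σ^2*ωn/(4*ζ) := by
    have hπ : π ≠ 0 := Real.pi_ne_zero
    field_simp
    ring
  rw [hstep, div_eq_div_iff (by positivity) (by positivity)]
  linear_combination 2*σ^2*hrel
end
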